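/- The Airy function satisfies the differential equation \(\mathrm{Ai}''(x) = x\,\mathrm{Ai}(x)\) for all real x, where \(\mathrm{Ai}(x) = \frac{1}{\pi}\int_0^\infty \cos(t^3/3 + xt)\, dt\). -/

import Mathlib

open Real Filter intervalIntegral MeasureTheory Set Topology
noncomputable section AirySection
namespace AiryAux

def ph (x t : ℝ) : ℝ := t ^ 3 / 3 + x * t
def kk (x t : ℝ) : ℝ := (4 * t ^ 3 - 8 * t * x) / (t ^ 2 + x) ^ 4
def kxx (x t : ℝ) : ℝ := 24 * t * (x - t ^ 2) / (t ^ 2 + x) ^ 5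
def G1 (x t : ℝ) : ℝ :=
  -(t * Real.cos (ph x t)) / (t ^ 2 + x) - Real.sin (ph x t) * (t ^ 2 - x) / (t ^ 2 + x) ^ 3
def EE (x t : ℝ) : ℝ :=
  t ^ 2 * Real.sin (ph x t) / (t ^ 2 + x) + t * Real.cos (ph x t) / (t ^ 2 + x) ^ 2
    - t * Real.cos (ph x t) * (t ^ 2 - x) / (t ^ 2 + x) ^ 3
    + Real.sin (ph x t) * (4 * t ^ 2 - 2 * x) / (t ^ 2 + x) ^ 4

lemma hd_ph_t (x t : ℝ) : HasDerivAt (fun t => ph x t) (t ^ 2 + x) t := by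
  have h1 : HasDerivAt (fun t : ℝ => t ^ 3 / 3) ((3 : ℕ) * t ^ 2 / 3) t :=
    (hasDerivAt_pow 3 t).div_const 3
  have h2 : HasDerivAt (fun t : ℝ => x * t) x t := by
    simpa using (hasDerivAt_id t).const_mul x
  have := h1.add h2
  refine this.congr_deriv ?_
  push_cast; ring

lemma hd_ph_x (x t : ℝ) : HasDerivAt (fun x => ph x t) t x := by
  have h2 : HasDerivAt (fun x : ℝ => x * t) t x := hasDerivAt_mul_const t
  simpa [ph] using (h2.const_add (t ^ 3 / 3))

lemma hd_sin_t (x t : ℝ) :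
    HasDerivAt (fun t => Real.sin (ph x t)) ((t ^ 2 + x) * Real.cos (ph x t)) t := by
  simpa [mul_comm] using (hd_ph_t x t).sin

lemma hd_cos_t (x t : ℝ) :
    HasDerivAt (fun t => Real.cos (ph x t)) (-((t ^ 2 + x) * Real.sin (ph x t))) t := by
  simpa [mul_comm] using (hd_ph_t x t).cos

lemma hd_cos_x (x t : ℝ) :
    HasDerivAt (fun x => Real.cos (ph x t)) (-(t * Real.sin (ph x t))) x := by
  simpa [mul_comm] using (hd_ph_x x t).cos

lemma hd_sin_x (x t : ℝ) :
    HasDerivAt (fun x => Real.sin (ph x t)) (t * Real.cos (ph x t)) x := by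
  simpa [mul_comm] using (hd_ph_x x t).sin

lemma hd_tsin_x (x t : ℝ) :
    HasDerivAt (fun x => -(t * Real.sin (ph x t))) (-(t ^ 2 * Real.cos (ph x t))) x := by
  have := ((hd_sin_x x t).const_mul t).neg
  refine this.congr_deriv ?_
  ring

lemma hd_den_t (x t : ℝ) (n : ℕ) :
    HasDerivAt (fun t : ℝ => (t ^ 2 + x) ^ n) ((n : ℝ) * (t ^ 2 + x) ^ (n - 1) * (2 * t)) t := by
  have h : HasDerivAt (fun t : ℝ => t ^ 2 + x) (2 * t) t := by
    simpa using (hasDerivAt_pow 2 t).add_const x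
  exact h.pow n

lemma hd_den_x (x t : ℝ) (n : ℕ) :
    HasDerivAt (fun x : ℝ => (t ^ 2 + x) ^ n) ((n : ℝ) * (t ^ 2 + x) ^ (n - 1) * 1) x := by
  have h : HasDerivAt (fun x : ℝ => t ^ 2 + x) 1 x := by
    simpa using (hasDerivAt_id x).const_add (t ^ 2)
  exact h.pow n

lemma hsq_t (t x : ℝ) : HasDerivAt (fun t : ℝ => t ^ 2 - x) (2 * t) t := by
  simpa using (hasDerivAt_pow 2 t).sub_const x

lemma hd_G1_t (x t : ℝ) (h : t ^ 2 + x ≠ 0) :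
    HasDerivAt (fun t => G1 x t)
      (t * Real.sin (ph x t) + Real.sin (ph x t) * kk x t) t := by
  have hA := (((hasDerivAt_id t).mul (hd_cos_t x t)).neg).div (hd_den_t x t 1)
    (by simpa using h)
  have hB := ((hd_sin_t x t).mul (hsq_t t x)).div (hd_den_t x t 3) (pow_ne_zero 3 h)
  have H := hA.sub hB
  convert H using 1
  · rfl
  · rfl
  · funext s; simp only [G1, id_eq, pow_one, Pi.sub_apply, Pi.div_apply, Pi.neg_apply, Pi.mul_apply]
  · simp only [id_eq]
    unfold kk
    norm_num
    field_simp
    ring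

lemma hd_G1_x (x t : ℝ) (h : t ^ 2 + x ≠ 0) :
    HasDerivAt (fun x => G1 x t) (EE x t) x := by
  have hden1 : HasDerivAt (fun x : ℝ => t ^ 2 + x) 1 x := by
    simpa using (hasDerivAt_id x).const_add (t ^ 2)
  have hsqx : HasDerivAt (fun x : ℝ => t ^ 2 - x) (-1) x := by
    simpa using (hasDerivAt_id x).const_sub (t ^ 2)
  have hA := (((hd_cos_x x t).const_mul t).neg).div hden1 h
  have hB := ((hd_sin_x x t).mul hsqx).div (hd_den_x x t 3) (pow_ne_zero 3 h)
  have H := hA.sub hB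
  refine H.congr_deriv ?_
  simp only [Pi.neg_apply, Pi.mul_apply, Pi.div_apply, Pi.sub_apply]
  unfold EE
  push_cast
  field_simp
  ring

lemma hd_sinkk_x (x t : ℝ) (h : t ^ 2 + x ≠ 0) :
    HasDerivAt (fun x => Real.sin (ph x t) * kk x t)
      (t * Real.cos (ph x t) * kk x t + Real.sin (ph x t) * kxx x t) x := by
  have hnum : HasDerivAt (fun x : ℝ => 4 * t ^ 3 - 8 * t * x) (-(8 * t)) x := by
    simpa using (((hasDerivAt_id x).const_mul (8 * t)).const_sub (4 * t ^ 3))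
  have hkk := hnum.div (hd_den_x x t 4) (pow_ne_zero 4 h)
  have H := (hd_sin_x x t).mul hkk
  refine H.congr_deriv ?_
  simp only [Pi.neg_apply, Pi.mul_apply, Pi.div_apply, Pi.sub_apply]
  unfold kk kxx
  push_cast
  field_simp
  ring

lemma hd_EE_t (x t : ℝ) (h : t ^ 2 + x ≠ 0) :
    HasDerivAt (fun t => EE x t)
      (t ^ 2 * Real.cos (ph x t) + t * Real.cos (ph x t) * kk x t
        + Real.sin (ph x t) * kxx x t) t := by
  have hsq : HasDerivAt (fun t : ℝ => t ^ 2) (2 * t) t := by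
    simpa using (hasDerivAt_pow 2 t)
  have hq : HasDerivAt (fun t : ℝ => 4 * t ^ 2 - 2 * x) (4 * (2 * t)) t :=
    (hsq.const_mul 4).sub_const (2 * x)
  have h1 := (hsq.mul (hd_sin_t x t)).div (hd_den_t x t 1) (by simpa using h)
  have h2 := ((hasDerivAt_id t).mul (hd_cos_t x t)).div (hd_den_t x t 2) (pow_ne_zero 2 h)
  have h3 := (((hasDerivAt_id t).mul (hd_cos_t x t)).mul (hsq_t t x)).div
    (hd_den_t x t 3) (pow_ne_zero 3 h)
  have h4 := ((hd_sin_t x t).mul hq).div (hd_den_t x t 4) (pow_ne_zero 4 h)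
  have H := ((h1.add h2).sub h3).add h4
  convert H using 1
  · rfl
  · rfl
  · funext s; simp only [EE, id_eq, pow_one, Pi.add_apply, Pi.sub_apply, Pi.div_apply, Pi.mul_apply]
  · simp only [id_eq]
    unfold kk kxx
    norm_num
    field_simp
    ring

lemma abs_add4 (a b c d : ℝ) : |a + b - c + d| ≤ |a| + |b| + |c| + |d| := by
  calc |a + b - c + d| ≤ |a + b - c| + |d| := abs_add_le _ _
  _ ≤ |a + b| + |c| + |d| := by linarith [abs_sub (a + b) c]
  _ ≤ |a| + |b| + |c| + |d| := by linarith [abs_add_le a b]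

lemma abs_div_le {u v a b : ℝ} (hu : |u| ≤ a) (hv : b ≤ v) (hb : 0 < b) :
    |u / v| ≤ a / b := by
  rw [abs_div, abs_of_pos (lt_of_lt_of_le hb hv)]
  exact div_le_div₀ (le_trans (abs_nonneg u) hu) hu hb hv

section bounds
variable {T t x : ℝ} (hT : 2 ≤ T) (ht : T ≤ t) (hx : |x| ≤ T - 1)

include hT ht hx

lemma ht2 : 2 ≤ t := le_trans hT ht

lemma hxhalf : |x| ≤ t ^ 2 / 2 := by
  nlinarith [abs_nonneg x]

lemma hden_lb : t ^ 2 / 2 ≤ t ^ 2 + x := by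
  have := (abs_le.mp (hxhalf hT ht hx)).1
  linarith

lemma hden_pos : 0 < t ^ 2 + x := by
  have h2 : 2 ≤ t := ht2 hT ht hx
  have := hden_lb hT ht hx
  nlinarith

lemma abs_kk_le : |kk x t| ≤ 128 / t ^ 5 := by
  have h2 : 2 ≤ t := ht2 hT ht hx
  have hxh := abs_le.mp (hxhalf hT ht hx)
  have hnum : |4 * t ^ 3 - 8 * t * x| ≤ 8 * t ^ 3 := by
    rw [abs_le]; constructor <;> nlinarith
  have hden4 : t ^ 8 / 16 ≤ (t ^ 2 + x) ^ 4 := by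
    have h := hden_lb hT ht hx
    have h0 : (0:ℝ) ≤ t ^ 2 / 2 := by positivity
    calc t ^ 8 / 16 = (t ^ 2 / 2) ^ 4 := by ring
    _ ≤ (t ^ 2 + x) ^ 4 := pow_le_pow_left₀ h0 h 4
  have := abs_div_le hnum hden4 (by positivity)
  refine le_trans this (le_of_eq ?_)
  field_simp
  ring

lemma abs_kxx_le : |kxx x t| ≤ 1152 / t ^ 7 := by
  have h2 : 2 ≤ t := ht2 hT ht hx
  have hxh := abs_le.mp (hxhalf hT ht hx)
  have hnum : |24 * t * (x - t ^ 2)| ≤ 36 * t ^ 3 := by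
    rw [abs_le]; constructor <;> nlinarith
  have hden5 : t ^ 10 / 32 ≤ (t ^ 2 + x) ^ 5 := by
    have h := hden_lb hT ht hx
    have h0 : (0:ℝ) ≤ t ^ 2 / 2 := by positivity
    calc t ^ 10 / 32 = (t ^ 2 / 2) ^ 5 := by ring
    _ ≤ (t ^ 2 + x) ^ 5 := pow_le_pow_left₀ h0 h 5
  have := abs_div_le hnum hden5 (by positivity)
  refine le_trans this (le_of_eq ?_)
  field_simp
  ring

lemma abs_sinkk_le : |Real.sin (ph x t) * kk x t| ≤ 128 / t ^ 5 := by
  have := abs_kk_le hT ht hx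
  calc |Real.sin (ph x t) * kk x t| = |Real.sin (ph x t)| * |kk x t| := abs_mul _ _
  _ ≤ 1 * (128 / t ^ 5) := by
      apply mul_le_mul (Real.abs_sin_le_one _) this (abs_nonneg _) zero_le_one
  _ = 128 / t ^ 5 := one_mul _

lemma abs_deriv_sinkk_le :
    |t * Real.cos (ph x t) * kk x t + Real.sin (ph x t) * kxx x t| ≤ 1280 / t ^ 4 := by
  have h2 : 2 ≤ t := ht2 hT ht hx
  have ht0 : (0:ℝ) < t := by linarith
  have h1 : |t * Real.cos (ph x t) * kk x t| ≤ 128 / t ^ 4 := by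
    rw [abs_mul, abs_mul, abs_of_pos ht0]
    calc t * |Real.cos (ph x t)| * |kk x t| ≤ t * 1 * (128 / t ^ 5) := by
          apply mul_le_mul
          · exact mul_le_mul_of_nonneg_left (Real.abs_cos_le_one _) (le_of_lt ht0)
          · exact abs_kk_le hT ht hx
          · exact abs_nonneg _
          · positivity
    _ = 128 / t ^ 4 := by field_simp
  have h2' : |Real.sin (ph x t) * kxx x t| ≤ 1152 / t ^ 7 := by
    rw [abs_mul]
    calc |Real.sin (ph x t)| * |kxx x t| ≤ 1 * (1152 / t ^ 7) := by
          apply mul_le_mul (Real.abs_sin_le_one _) (abs_kxx_le hT ht hx) (abs_nonneg _) zero_le_one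
    _ = 1152 / t ^ 7 := one_mul _
  have h3 : (1152:ℝ) / t ^ 7 ≤ 1152 / t ^ 4 := by
    apply div_le_div_of_nonneg_left (by norm_num) (by positivity)
    have ht1 : (1:ℝ) ≤ t ^ 3 := one_le_pow₀ (by linarith)
    calc t ^ 4 = t ^ 4 * 1 := by ring
    _ ≤ t ^ 4 * t ^ 3 := by nlinarith [pow_pos ht0 4]
    _ = t ^ 7 := by ring
  calc |t * Real.cos (ph x t) * kk x t + Real.sin (ph x t) * kxx x t|
      ≤ |t * Real.cos (ph x t) * kk x t| + |Real.sin (ph x t) * kxx x t| := abs_add_le _ _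
  _ ≤ 128 / t ^ 4 + 1152 / t ^ 4 := by linarith
  _ = 1280 / t ^ 4 := by ring

lemma abs_G1_le : |G1 x t| ≤ 14 / t := by
  have h2 : 2 ≤ t := ht2 hT ht hx
  have ht0 : (0:ℝ) < t := by linarith
  have hxh := abs_le.mp (hxhalf hT ht hx)
  have hd := hden_lb hT ht hx
  have h1 : |(-(t * Real.cos (ph x t))) / (t ^ 2 + x)| ≤ t / (t ^ 2 / 2) := by
    apply abs_div_le _ hd (by positivity)
    rw [abs_neg, abs_mul, abs_of_pos ht0]
    calc t * |Real.cos (ph x t)| ≤ t * 1 :=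
        mul_le_mul_of_nonneg_left (Real.abs_cos_le_one _) (le_of_lt ht0)
    _ = t := mul_one t
  have h2' : |Real.sin (ph x t) * (t ^ 2 - x) / (t ^ 2 + x) ^ 3| ≤ (3 / 2 * t ^ 2) / (t ^ 6 / 8) := by
    apply abs_div_le _ _ (by positivity)
    · rw [abs_mul]
      calc |Real.sin (ph x t)| * |t ^ 2 - x| ≤ 1 * (3 / 2 * t ^ 2) := by
            apply mul_le_mul (Real.abs_sin_le_one _) _ (abs_nonneg _) zero_le_one
            rw [abs_le]; constructor <;> nlinarith
      _ = 3 / 2 * t ^ 2 := one_mul _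
    · have h0 : (0:ℝ) ≤ t ^ 2 / 2 := by positivity
      calc t ^ 6 / 8 = (t ^ 2 / 2) ^ 3 := by ring
      _ ≤ (t ^ 2 + x) ^ 3 := pow_le_pow_left₀ h0 hd 3
  have e1 : t / (t ^ 2 / 2) = 2 / t := by field_simp
  have e2 : (3 / 2 * t ^ 2) / (t ^ 6 / 8) = 12 / t ^ 4 := by field_simp; ring
  have h3 : (12:ℝ) / t ^ 4 ≤ 12 / t := by
    apply div_le_div_of_nonneg_left (by norm_num) ht0
    have ht1 : (1:ℝ) ≤ t ^ 3 := one_le_pow₀ (by linarith)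
    nlinarith [pow_pos ht0 1]
  calc |G1 x t| ≤ |(-(t * Real.cos (ph x t))) / (t ^ 2 + x)|
        + |Real.sin (ph x t) * (t ^ 2 - x) / (t ^ 2 + x) ^ 3| := abs_sub _ _
  _ ≤ 2 / t + 12 / t := by rw [e1] at h1; rw [e2] at h2'; linarith
  _ = 14 / t := by ring

set_option maxHeartbeats 1000000 in
lemma abs_EE_sub_le : |EE x t - Real.sin (ph x t)| ≤ (2 * T + 112) / t := by
  have h2 : 2 ≤ t := ht2 hT ht hx
  have ht0 : (0:ℝ) < t := by linarith
  have hxh := abs_le.mp (hxhalf hT ht hx)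
  have hd := hden_lb hT ht hx
  have hdp := hden_pos hT ht hx
  have key : EE x t - Real.sin (ph x t)
      = -(x * Real.sin (ph x t)) / (t ^ 2 + x) + t * Real.cos (ph x t) / (t ^ 2 + x) ^ 2
        - t * Real.cos (ph x t) * (t ^ 2 - x) / (t ^ 2 + x) ^ 3
        + Real.sin (ph x t) * (4 * t ^ 2 - 2 * x) / (t ^ 2 + x) ^ 4 := by
    unfold EE
    field_simp
    ring
  have habsx : |x| ≤ T - 1 := hx
  have b0 : |(-(x * Real.sin (ph x t))) / (t ^ 2 + x)| ≤ (T - 1) / (t ^ 2 / 2) := by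
    apply abs_div_le _ hd (by positivity)
    rw [abs_neg, abs_mul]
    calc |x| * |Real.sin (ph x t)| ≤ (T - 1) * 1 :=
        mul_le_mul habsx (Real.abs_sin_le_one _) (abs_nonneg _) (by linarith)
    _ = T - 1 := mul_one _
  have b1 : |t * Real.cos (ph x t) / (t ^ 2 + x) ^ 2| ≤ t / (t ^ 4 / 4) := by
    apply abs_div_le _ _ (by positivity)
    · rw [abs_mul, abs_of_pos ht0]
      calc t * |Real.cos (ph x t)| ≤ t * 1 :=
          mul_le_mul_of_nonneg_left (Real.abs_cos_le_one _) (le_of_lt ht0)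
      _ = t := mul_one t
    · have h0 : (0:ℝ) ≤ t ^ 2 / 2 := by positivity
      calc t ^ 4 / 4 = (t ^ 2 / 2) ^ 2 := by ring
      _ ≤ (t ^ 2 + x) ^ 2 := pow_le_pow_left₀ h0 hd 2
  have b2 : |t * Real.cos (ph x t) * (t ^ 2 - x) / (t ^ 2 + x) ^ 3|
      ≤ (3 / 2 * t ^ 3) / (t ^ 6 / 8) := by
    apply abs_div_le _ _ (by positivity)
    · rw [abs_mul, abs_mul, abs_of_pos ht0]
      have hc : t * |Real.cos (ph x t)| ≤ t :=
        le_of_eq_of_le rfl (by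
          calc t * |Real.cos (ph x t)| ≤ t * 1 :=
              mul_le_mul_of_nonneg_left (Real.abs_cos_le_one _) (le_of_lt ht0)
          _ = t := mul_one t)
      have hs : |t ^ 2 - x| ≤ 3 / 2 * t ^ 2 := by
        rw [abs_le]; constructor <;> nlinarith
      calc t * |Real.cos (ph x t)| * |t ^ 2 - x| ≤ t * (3 / 2 * t ^ 2) := by
            apply mul_le_mul hc hs (abs_nonneg _) (le_of_lt ht0)
      _ = 3 / 2 * t ^ 3 := by ring
    · have h0 : (0:ℝ) ≤ t ^ 2 / 2 := by positivity
      calc t ^ 6 / 8 = (t ^ 2 / 2) ^ 3 := by ring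
      _ ≤ (t ^ 2 + x) ^ 3 := pow_le_pow_left₀ h0 hd 3
  have b3 : |Real.sin (ph x t) * (4 * t ^ 2 - 2 * x) / (t ^ 2 + x) ^ 4|
      ≤ (5 * t ^ 2) / (t ^ 8 / 16) := by
    apply abs_div_le _ _ (by positivity)
    · rw [abs_mul]
      have hs : |4 * t ^ 2 - 2 * x| ≤ 5 * t ^ 2 := by
        rw [abs_le]; constructor <;> nlinarith
      calc |Real.sin (ph x t)| * |4 * t ^ 2 - 2 * x| ≤ 1 * (5 * t ^ 2) :=
          mul_le_mul (Real.abs_sin_le_one _) hs (abs_nonneg _) zero_le_one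
      _ = 5 * t ^ 2 := one_mul _
    · have h0 : (0:ℝ) ≤ t ^ 2 / 2 := by positivity
      calc t ^ 8 / 16 = (t ^ 2 / 2) ^ 4 := by ring
      _ ≤ (t ^ 2 + x) ^ 4 := pow_le_pow_left₀ h0 hd 4
  have hT0 : (0:ℝ) < T := by linarith
  have e0 : (T - 1) / (t ^ 2 / 2) ≤ 2 * T / t := by
    rw [div_le_div_iff₀ (by positivity) ht0]
    nlinarith
  have h4 : (4:ℝ) ≤ t ^ 2 := by nlinarith
  have ht4 : (0:ℝ) ≤ t ^ 2 - 4 := by linarith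
  have e1 : t / (t ^ 4 / 4) ≤ 4 / t := by
    rw [div_le_div_iff₀ (by positivity) ht0]
    nlinarith [mul_nonneg ht4 (sq_nonneg t)]
  have e2 : (3 / 2 * t ^ 3) / (t ^ 6 / 8) ≤ 12 / t := by
    rw [div_le_div_iff₀ (by positivity) ht0]
    nlinarith [mul_nonneg ht4 (sq_nonneg (t ^ 2))]
  have e3 : (5 * t ^ 2) / (t ^ 8 / 16) ≤ 80 / t := by
    rw [div_le_div_iff₀ (by positivity) ht0]
    nlinarith [mul_nonneg (mul_nonneg ht4 (sq_nonneg (t ^ 2))) ht0.le, pow_pos ht0 3]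
  rw [key]
  have habs := abs_add4 (-(x * Real.sin (ph x t)) / (t ^ 2 + x))
    (t * Real.cos (ph x t) / (t ^ 2 + x) ^ 2)
    (t * Real.cos (ph x t) * (t ^ 2 - x) / (t ^ 2 + x) ^ 3)
    (Real.sin (ph x t) * (4 * t ^ 2 - 2 * x) / (t ^ 2 + x) ^ 4)
  refine le_trans habs ?_
  have : 2 * T / t + 4 / t + 12 / t + 80 / t = (2 * T + 96) / t := by ring
  have hfin : (2 * T + 96) / t ≤ (2 * T + 112) / t := by
    gcongr
    linarith
  linarith

end bounds

lemma cont_sin_ph (x : ℝ) : Continuous fun t : ℝ => Real.sin (ph x t) := by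
  apply Real.continuous_sin.comp
  unfold ph
  exact ((continuous_pow 3).div_const 3).add (continuous_const.mul continuous_id)

lemma cont_cos_ph (x : ℝ) : Continuous fun t : ℝ => Real.cos (ph x t) := by
  apply Real.continuous_cos.comp
  unfold ph
  exact ((continuous_pow 3).div_const 3).add (continuous_const.mul continuous_id)

lemma cont_tsin_ph (x : ℝ) : Continuous fun t : ℝ => -(t * Real.sin (ph x t)) :=
  (continuous_id.mul (cont_sin_ph x)).neg

lemma cont_t2cos_ph (x : ℝ) : Continuous fun t : ℝ => -(t ^ 2 * Real.cos (ph x t)) :=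
  ((continuous_pow 2).mul (cont_cos_ph x)).neg

variable {T x : ℝ}

lemma den_ne_of_mem (hT : 2 ≤ T) (hx : |x| ≤ T - 1) {t : ℝ} (ht : T ≤ t) :
    t ^ 2 + x ≠ 0 := ne_of_gt (hden_pos hT ht hx)

lemma contOn_sinkk (hT : 2 ≤ T) (hx : |x| ≤ T - 1) :
    ContinuousOn (fun t : ℝ => Real.sin (ph x t) * kk x t) (Ici T) := by
  apply ((cont_sin_ph x).continuousOn).mul
  unfold kk
  apply ContinuousOn.div
  · exact Continuous.continuousOn (by fun_prop)
  · exact Continuous.continuousOn (by fun_prop)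
  · intro t ht
    exact pow_ne_zero 4 (den_ne_of_mem hT hx ht)

lemma contOn_dsinkk (hT : 2 ≤ T) (hx : |x| ≤ T - 1) :
    ContinuousOn
      (fun t : ℝ => t * Real.cos (ph x t) * kk x t + Real.sin (ph x t) * kxx x t) (Ici T) := by
  apply ContinuousOn.add
  · apply (continuous_id.mul (cont_cos_ph x)).continuousOn.mul
    unfold kk
    apply ContinuousOn.div
    · exact Continuous.continuousOn (by fun_prop)
    · exact Continuous.continuousOn (by fun_prop)
    · intro t ht
      exact pow_ne_zero 4 (den_ne_of_mem hT hx ht)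
  · apply ((cont_sin_ph x).continuousOn).mul
    unfold kxx
    apply ContinuousOn.div
    · exact Continuous.continuousOn (by fun_prop)
    · exact Continuous.continuousOn (by fun_prop)
    · intro t ht
      exact pow_ne_zero 5 (den_ne_of_mem hT hx ht)

lemma integrableOn_div_pow (C : ℝ) {n : ℕ} (hn : 2 ≤ n) {c : ℝ} (hc : 0 < c) :
    IntegrableOn (fun t : ℝ => C / t ^ n) (Ioi c) := by
  have h1 : IntegrableOn (fun t : ℝ => t ^ (-(n : ℝ))) (Ioi c) :=
    integrableOn_Ioi_rpow_of_lt (by norm_num; exact_mod_cast by omega) hc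
  have h2 : IntegrableOn (fun t : ℝ => C * t ^ (-(n : ℝ))) (Ioi c) := h1.const_mul C
  apply h2.congr_fun _ measurableSet_Ioi
  intro t ht
  have ht0 : 0 < t := lt_trans hc ht
  show C * t ^ (-(n : ℝ)) = C / t ^ n
  rw [Real.rpow_neg ht0.le, Real.rpow_natCast, div_eq_mul_inv]

lemma integrable_split {f : ℝ → ℝ} {c R : ℝ} (hcR : c ≤ R) (hf : IntegrableOn f (Ioi c)) :
    (∫ t in Ioi c, f t) = (∫ t in c..R, f t) + ∫ t in Ioi R, f t := by
  rw [intervalIntegral.integral_of_le hcR]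
  rw [← MeasureTheory.setIntegral_union Ioc_disjoint_Ioi_same measurableSet_Ioi
      (hf.mono_set Ioc_subset_Ioi_self) (hf.mono_set (Ioi_subset_Ioi hcR))]
  rw [Ioc_union_Ioi_eq_Ioi hcR]

lemma tendsto_tail_zero {f : ℝ → ℝ} {c : ℝ} (hf : IntegrableOn f (Ioi c)) :
    Tendsto (fun R => ∫ t in Ioi R, f t) atTop (𝓝 0) := by
  have h1 : Tendsto (fun R => ∫ t in c..R, f t) atTop (𝓝 (∫ t in Ioi c, f t)) :=
    intervalIntegral_tendsto_integral_Ioi c hf tendsto_id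
  have h2 : Tendsto (fun R => (∫ t in Ioi c, f t) - ∫ t in c..R, f t) atTop
      (𝓝 ((∫ t in Ioi c, f t) - ∫ t in Ioi c, f t)) := tendsto_const_nhds.sub h1
  rw [sub_self] at h2
  apply h2.congr'
  filter_upwards [eventually_ge_atTop c] with R hR
  rw [integrable_split hR hf]
  ring

end AiryAux
end AirySection

open AiryAux

/-- The Airy function `Ai(x) = (1/π) ∫₀^∞ cos(t³/3 + xt) dt` (improper
Riemann integral) satisfies the Airy differential equation `Ai''(x) = x Ai(x)`. -/
theorem airy_ode (Ai : ℝ → ℝ)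
    (hAi : ∀ x : ℝ,
      Tendsto (fun R : ℝ => (1 / π) * ∫ t in (0:ℝ)..R, Real.cos (t ^ 3 / 3 + x * t))
        atTop (nhds (Ai x))) :
    ∀ x : ℝ, deriv (deriv Ai) x = x * Ai x := by
  intro x₀
  set T : ℝ := |x₀| + 2 with hTdef
  have hT : 2 ≤ T := by rw [hTdef]; linarith [abs_nonneg x₀]
  have hTpos : (0:ℝ) < T := by linarith
  set s : Set ℝ := Metric.ball x₀ 1 with hsdef
  have hs_open : IsOpen s := Metric.isOpen_ball
  have hx₀s : x₀ ∈ s := Metric.mem_ball_self one_pos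
  have hballx : ∀ x ∈ s, |x| ≤ T - 1 := by
    intro x hx
    have h1 : |x - x₀| < 1 := by
      rw [hsdef] at hx; simpa [Real.dist_eq] using hx
    have h2 : |x| ≤ |x₀| + |x - x₀| := by
      calc |x| = |x₀ + (x - x₀)| := by ring_nf
      _ ≤ |x₀| + |x - x₀| := abs_add_le _ _
    simp [hTdef]; linarith
  have hx₀T : T ^ 2 + x₀ ≠ 0 :=
    den_ne_of_mem hT (hballx x₀ hx₀s) le_rfl
  -- the truncated integrals and their x-derivatives
  set Fn : ℝ → ℝ → ℝ := fun R x => ∫ t in (0:ℝ)..R, Real.cos (ph x t) with hFndef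
  set Fn' : ℝ → ℝ → ℝ := fun R x => ∫ t in (0:ℝ)..R, -(t * Real.sin (ph x t)) with hFn'def
  set A1 : ℝ → ℝ := fun x => (∫ t in (0:ℝ)..T, -(t * Real.sin (ph x t))) + G1 x T
      + ∫ t in Ioi T, Real.sin (ph x t) * kk x t with hA1def
  -- pointwise convergence of Fn to π * Ai
  have hpt : ∀ x : ℝ, Tendsto (fun R => Fn R x) atTop (𝓝 (π * Ai x)) := by
    intro x
    have h0 := (hAi x).const_mul π
    have he : (fun R : ℝ => π * ((1 / π) * ∫ t in (0:ℝ)..R, Real.cos (t ^ 3 / 3 + x * t)))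
        = fun R => Fn R x := by
      funext R
      rw [hFndef]
      have : π ≠ 0 := Real.pi_ne_zero
      rw [← mul_assoc, mul_one_div_cancel this, one_mul]; rfl
    rwa [he] at h0
  -- integrability of the tail integrand on Ioi T
  have hint_sinkk : ∀ x ∈ s, IntegrableOn (fun t => Real.sin (ph x t) * kk x t) (Ioi T) := by
    intro x hx
    apply Integrable.mono' (integrableOn_div_pow 128 (by norm_num : 2 ≤ 5) hTpos)
      (((contOn_sinkk hT (hballx x hx)).mono Ioi_subset_Ici_self).aestronglyMeasurable
        measurableSet_Ioi)
    rw [ae_restrict_iff' measurableSet_Ioi]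
    filter_upwards with t ht
    exact abs_sinkk_le hT (le_of_lt ht) (hballx x hx)
  have hint_dsinkk : ∀ x ∈ s, IntegrableOn
      (fun t => t * Real.cos (ph x t) * kk x t + Real.sin (ph x t) * kxx x t) (Ioi T) := by
    intro x hx
    apply Integrable.mono' (integrableOn_div_pow 1280 (by norm_num : 2 ≤ 4) hTpos)
      (((contOn_dsinkk hT (hballx x hx)).mono Ioi_subset_Ici_self).aestronglyMeasurable
        measurableSet_Ioi)
    rw [ae_restrict_iff' measurableSet_Ioi]
    filter_upwards with t ht
    exact abs_deriv_sinkk_le hT (le_of_lt ht) (hballx x hx)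
  -- derivative of the truncated integral
  have hFderiv : ∀ R : ℝ, ∀ x ∈ s, HasDerivAt (Fn R) (Fn' R x) x := by
    intro R x _
    have key := intervalIntegral.hasDerivAt_integral_of_dominated_loc_of_deriv_le
      (F := fun x t => Real.cos (ph x t)) (F' := fun x t => -(t * Real.sin (ph x t)))
      (x₀ := x) (a := 0) (b := R) (bound := fun t => |t|) (μ := volume) (Metric.ball_mem_nhds _ one_pos)
      (Filter.Eventually.of_forall fun y =>
        ((cont_cos_ph y).aestronglyMeasurable).restrict)
      ((cont_cos_ph x).intervalIntegrable 0 R)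
      ((cont_tsin_ph x).aestronglyMeasurable).restrict
      ?_ (continuous_abs.intervalIntegrable 0 R) ?_
    · exact key.2
    · filter_upwards with t _ y _
      rw [norm_neg, norm_mul]
      calc ‖t‖ * ‖Real.sin (ph y t)‖ ≤ ‖t‖ * 1 := by
            apply mul_le_mul_of_nonneg_left _ (norm_nonneg t)
            exact Real.abs_sin_le_one _
      _ = |t| := by rw [mul_one]; rfl
    · filter_upwards with t _ y _
      exact hd_cos_x y t
  -- uniform convergence of Fn' to A1 on s
  have hTU : TendstoUniformlyOn Fn' A1 atTop s := by
    have hbnd : ∀ᶠ R in atTop, ∀ x ∈ s,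
        |A1 x - Fn' R x| ≤ 14 / R + ∫ t in Ioi R, 128 / t ^ 5 := by
      filter_upwards [eventually_ge_atTop T] with R hR x hxs
      have hxb := hballx x hxs
      have hIsplit : Fn' R x = (∫ t in (0:ℝ)..T, -(t * Real.sin (ph x t)))
          + ∫ t in T..R, -(t * Real.sin (ph x t)) := by
        rw [hFn'def]
        exact (intervalIntegral.integral_add_adjacent_intervals
          ((cont_tsin_ph x).intervalIntegrable 0 T)
          ((cont_tsin_ph x).intervalIntegrable T R)).symm
      have hftc : ∫ t in T..R, (t * Real.sin (ph x t) + Real.sin (ph x t) * kk x t)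
          = G1 x R - G1 x T := by
        apply intervalIntegral.integral_eq_sub_of_hasDerivAt
        · intro t htmem
          rw [uIcc_of_le hR] at htmem
          exact hd_G1_t x t (den_ne_of_mem hT hxb htmem.1)
        · apply ContinuousOn.intervalIntegrable
          rw [uIcc_of_le hR]
          apply ContinuousOn.add
          · exact (continuous_id.mul (cont_sin_ph x)).continuousOn
          · exact (contOn_sinkk hT hxb).mono (fun t htm => htm.1)
      have hsplit2 : ∫ t in T..R, (t * Real.sin (ph x t) + Real.sin (ph x t) * kk x t)
          = (∫ t in T..R, t * Real.sin (ph x t)) + ∫ t in T..R, Real.sin (ph x t) * kk x t := by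
        apply intervalIntegral.integral_add
        · exact (continuous_id.mul (cont_sin_ph x)).intervalIntegrable T R
        · apply ContinuousOn.intervalIntegrable
          rw [uIcc_of_le hR]
          exact (contOn_sinkk hT hxb).mono (fun t htm => htm.1)
      have hneg : ∫ t in T..R, -(t * Real.sin (ph x t))
          = -∫ t in T..R, t * Real.sin (ph x t) := intervalIntegral.integral_neg
      have htailsplit : (∫ t in Ioi T, Real.sin (ph x t) * kk x t)
          = (∫ t in T..R, Real.sin (ph x t) * kk x t)
            + ∫ t in Ioi R, Real.sin (ph x t) * kk x t :=
        integrable_split hR (hint_sinkk x hxs)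
      have hdiffeq : A1 x - Fn' R x
          = G1 x R + ∫ t in Ioi R, Real.sin (ph x t) * kk x t := by
        have h1 : (∫ t in T..R, t * Real.sin (ph x t))
            = G1 x R - G1 x T - ∫ t in T..R, Real.sin (ph x t) * kk x t := by
          rw [← hftc, hsplit2]; ring
        simp only [hA1def]
        rw [hIsplit, hneg, h1, htailsplit]
        ring
      rw [hdiffeq]
      have hRT2 : 2 ≤ R := le_trans hT hR
      have hxbR : |x| ≤ R - 1 := le_trans hxb (by linarith)
      have hG1 : |G1 x R| ≤ 14 / R := abs_G1_le hRT2 le_rfl hxbR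
      have htail : |∫ t in Ioi R, Real.sin (ph x t) * kk x t|
          ≤ ∫ t in Ioi R, 128 / t ^ 5 := by
        rw [← Real.norm_eq_abs]
        apply MeasureTheory.norm_integral_le_of_norm_le
          (integrableOn_div_pow 128 (by norm_num : 2 ≤ 5) (by linarith : (0:ℝ) < R))
        rw [ae_restrict_iff' measurableSet_Ioi]
        filter_upwards with t ht
        exact abs_sinkk_le hRT2 (le_of_lt ht) hxbR
      calc |G1 x R + ∫ t in Ioi R, Real.sin (ph x t) * kk x t|
          ≤ |G1 x R| + |∫ t in Ioi R, Real.sin (ph x t) * kk x t| := abs_add_le _ _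
      _ ≤ 14 / R + ∫ t in Ioi R, 128 / t ^ 5 := add_le_add hG1 htail
    have hbnd0 : Tendsto (fun R : ℝ => 14 / R + ∫ t in Ioi R, 128 / t ^ 5) atTop (𝓝 0) := by
      have h1 : Tendsto (fun R : ℝ => 14 / R) atTop (𝓝 0) :=
        tendsto_const_nhds.div_atTop tendsto_id
      have h2 := tendsto_tail_zero (integrableOn_div_pow 128 (by norm_num : 2 ≤ 5) hTpos)
      simpa using h1.add h2
    rw [Metric.tendstoUniformlyOn_iff]
    intro ε hε
    filter_upwards [hbnd, hbnd0.eventually_lt_const hε] with R hR1 hR2 x hxs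
    rw [Real.dist_eq]
    exact lt_of_le_of_lt (hR1 x hxs) hR2
  -- Ai is differentiable on s with derivative A1 / π
  have hAi' : ∀ x ∈ s, HasDerivAt (fun y => π * Ai y) (A1 x) x := by
    intro x hxs
    exact hasDerivAt_of_tendstoUniformlyOn hs_open hTU
      (Filter.Eventually.of_forall hFderiv) (fun y _ => hpt y) hxs
  -- derivative of A1 at x₀
  set DD : ℝ := (∫ t in (0:ℝ)..T, -(t ^ 2 * Real.cos (ph x₀ t))) + EE x₀ T
      + ∫ t in Ioi T, (t * Real.cos (ph x₀ t) * kk x₀ t + Real.sin (ph x₀ t) * kxx x₀ t)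
    with hDDdef
  have hA1deriv : HasDerivAt A1 DD x₀ := by
    have hf1 : HasDerivAt (fun x => ∫ t in (0:ℝ)..T, -(t * Real.sin (ph x t)))
        (∫ t in (0:ℝ)..T, -(t ^ 2 * Real.cos (ph x₀ t))) x₀ := by
      have key := intervalIntegral.hasDerivAt_integral_of_dominated_loc_of_deriv_le
        (F := fun x t => -(t * Real.sin (ph x t))) (F' := fun x t => -(t ^ 2 * Real.cos (ph x t)))
        (x₀ := x₀) (a := 0) (b := T) (bound := fun t => t ^ 2) (μ := volume) (Metric.ball_mem_nhds _ one_pos)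
        (Filter.Eventually.of_forall fun y =>
          ((cont_tsin_ph y).aestronglyMeasurable).restrict)
        ((cont_tsin_ph x₀).intervalIntegrable 0 T)
        ((cont_t2cos_ph x₀).aestronglyMeasurable).restrict
        ?_ ((continuous_pow 2).intervalIntegrable 0 T) ?_
      · exact key.2
      · filter_upwards with t _ y _
        rw [norm_neg, norm_mul]
        calc ‖t ^ 2‖ * ‖Real.cos (ph y t)‖ ≤ ‖t ^ 2‖ * 1 :=
            mul_le_mul_of_nonneg_left (Real.abs_cos_le_one _) (norm_nonneg _)
        _ = t ^ 2 := by rw [mul_one, Real.norm_eq_abs, abs_of_nonneg (sq_nonneg t)]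
      · filter_upwards with t _ y _
        exact hd_tsin_x y t
    have hf2 : HasDerivAt (fun x => G1 x T) (EE x₀ T) x₀ := hd_G1_x x₀ T hx₀T
    have hf3 : HasDerivAt (fun x => ∫ t in Ioi T, Real.sin (ph x t) * kk x t)
        (∫ t in Ioi T, (t * Real.cos (ph x₀ t) * kk x₀ t + Real.sin (ph x₀ t) * kxx x₀ t))
        x₀ := by
      have hsub : Metric.ball x₀ (1:ℝ) ⊆ s := by rw [hsdef]
      have key := hasDerivAt_integral_of_dominated_loc_of_deriv_le
        (F := fun x t => Real.sin (ph x t) * kk x t)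
        (F' := fun x t => t * Real.cos (ph x t) * kk x t + Real.sin (ph x t) * kxx x t)
        (x₀ := x₀) (bound := fun t => 1280 / t ^ 4)
        (μ := volume.restrict (Ioi T)) (Metric.ball_mem_nhds _ one_pos)
        ?_ (hint_sinkk x₀ hx₀s)
        (((contOn_dsinkk hT (hballx x₀ hx₀s)).mono Ioi_subset_Ici_self).aestronglyMeasurable
          measurableSet_Ioi)
        ?_ (integrableOn_div_pow 1280 (by norm_num : 2 ≤ 4) hTpos) ?_
      · exact key.2
      · filter_upwards [hs_open.mem_nhds hx₀s] with x hxs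
        exact ((contOn_sinkk hT (hballx x hxs)).mono Ioi_subset_Ici_self).aestronglyMeasurable
          measurableSet_Ioi
      · rw [ae_restrict_iff' measurableSet_Ioi]
        filter_upwards with t ht x hxb
        exact abs_deriv_sinkk_le hT (le_of_lt ht) (hballx x (hsub hxb))
      · rw [ae_restrict_iff' measurableSet_Ioi]
        filter_upwards with t ht x hxb
        exact hd_sinkk_x x t (den_ne_of_mem hT (hballx x (hsub hxb)) (le_of_lt ht))
    rw [hA1def, hDDdef]
    exact (hf1.add hf2).add hf3
  -- identify DD with x₀ * (π * Ai x₀)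
  have hDD : DD = x₀ * (π * Ai x₀) := by
    have hconv1 : Tendsto (fun R => x₀ * Fn R x₀) atTop (𝓝 (x₀ * (π * Ai x₀))) :=
      (hpt x₀).const_mul x₀
    have hkey : ∀ᶠ R in atTop, x₀ * Fn R x₀
        = DD + (Real.sin (ph x₀ R) - EE x₀ R)
          + ((∫ t in T..R, (t * Real.cos (ph x₀ t) * kk x₀ t + Real.sin (ph x₀ t) * kxx x₀ t))
            - ∫ t in Ioi T, (t * Real.cos (ph x₀ t) * kk x₀ t + Real.sin (ph x₀ t) * kxx x₀ t)) := by
      filter_upwards [eventually_ge_atTop T] with R hR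
      have hxb := hballx x₀ hx₀s
      have hftc1 : ∫ t in (0:ℝ)..R, (t ^ 2 + x₀) * Real.cos (ph x₀ t)
          = Real.sin (ph x₀ R) := by
        have h0 : Real.sin (ph x₀ 0) = 0 := by
          simp [ph]
        have hft := intervalIntegral.integral_eq_sub_of_hasDerivAt
          (f := fun t => Real.sin (ph x₀ t)) (f' := fun t => (t ^ 2 + x₀) * Real.cos (ph x₀ t))
          (a := 0) (b := R) (fun t _ => hd_sin_t x₀ t)
          ((((continuous_pow 2).add continuous_const).mul
            (cont_cos_ph x₀)).intervalIntegrable 0 R)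
        simpa [h0] using hft
      have hsplitI : ∫ t in (0:ℝ)..R, (t ^ 2 + x₀) * Real.cos (ph x₀ t)
          = (∫ t in (0:ℝ)..R, t ^ 2 * Real.cos (ph x₀ t)) + x₀ * Fn R x₀ := by
        rw [hFndef]
        rw [← intervalIntegral.integral_const_mul]
        rw [← intervalIntegral.integral_add (f := fun t => t ^ 2 * Real.cos (ph x₀ t))
            (g := fun t => x₀ * Real.cos (ph x₀ t))
          (((continuous_pow 2).mul (cont_cos_ph x₀)).intervalIntegrable 0 R)
          ((continuous_const.mul (cont_cos_ph x₀)).intervalIntegrable 0 R)]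
        congr 1
        funext t
        ring
      have hIsplit : ∫ t in (0:ℝ)..R, t ^ 2 * Real.cos (ph x₀ t)
          = (∫ t in (0:ℝ)..T, t ^ 2 * Real.cos (ph x₀ t))
            + ∫ t in T..R, t ^ 2 * Real.cos (ph x₀ t) :=
        (intervalIntegral.integral_add_adjacent_intervals
          (((continuous_pow 2).mul (cont_cos_ph x₀)).intervalIntegrable 0 T)
          (((continuous_pow 2).mul (cont_cos_ph x₀)).intervalIntegrable T R)).symm
      have hftc2 : ∫ t in T..R, (t ^ 2 * Real.cos (ph x₀ t)
            + (t * Real.cos (ph x₀ t) * kk x₀ t + Real.sin (ph x₀ t) * kxx x₀ t))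
          = EE x₀ R - EE x₀ T := by
        apply intervalIntegral.integral_eq_sub_of_hasDerivAt
        · intro t htmem
          rw [uIcc_of_le hR] at htmem
          have := hd_EE_t x₀ t (den_ne_of_mem hT hxb htmem.1)
          refine this.congr_deriv ?_
          ring
        · apply ContinuousOn.intervalIntegrable
          rw [uIcc_of_le hR]
          apply ContinuousOn.add
          · exact ((continuous_pow 2).mul (cont_cos_ph x₀)).continuousOn
          · exact (contOn_dsinkk hT hxb).mono (fun t htm => htm.1)
      have hsplit3 : ∫ t in T..R, (t ^ 2 * Real.cos (ph x₀ t)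
            + (t * Real.cos (ph x₀ t) * kk x₀ t + Real.sin (ph x₀ t) * kxx x₀ t))
          = (∫ t in T..R, t ^ 2 * Real.cos (ph x₀ t))
            + ∫ t in T..R, (t * Real.cos (ph x₀ t) * kk x₀ t + Real.sin (ph x₀ t) * kxx x₀ t) := by
        apply intervalIntegral.integral_add
        · exact ((continuous_pow 2).mul (cont_cos_ph x₀)).intervalIntegrable T R
        · apply ContinuousOn.intervalIntegrable
          rw [uIcc_of_le hR]
          exact (contOn_dsinkk hT hxb).mono (fun t htm => htm.1)
      have hneg1 : (∫ t in (0:ℝ)..T, -(t ^ 2 * Real.cos (ph x₀ t)))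
          = -∫ t in (0:ℝ)..T, t ^ 2 * Real.cos (ph x₀ t) := intervalIntegral.integral_neg
      have hx₀Fn : x₀ * Fn R x₀ = Real.sin (ph x₀ R)
          - ((∫ t in (0:ℝ)..T, t ^ 2 * Real.cos (ph x₀ t))
            + ((EE x₀ R - EE x₀ T)
              - ∫ t in T..R, (t * Real.cos (ph x₀ t) * kk x₀ t
                  + Real.sin (ph x₀ t) * kxx x₀ t))) := by
        have h2 : ∫ t in T..R, t ^ 2 * Real.cos (ph x₀ t)
            = (EE x₀ R - EE x₀ T)
              - ∫ t in T..R, (t * Real.cos (ph x₀ t) * kk x₀ t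
                  + Real.sin (ph x₀ t) * kxx x₀ t) := by
          rw [← hftc2, hsplit3]; ring
        rw [← h2, ← hIsplit]
        rw [hftc1] at hsplitI
        linarith
      rw [hx₀Fn, hDDdef, hneg1]
      ring
    have he1 : Tendsto (fun R => Real.sin (ph x₀ R) - EE x₀ R) atTop (𝓝 0) := by
      apply squeeze_zero_norm' _ (show Tendsto (fun R : ℝ => (2 * T + 112) / R) atTop (𝓝 0) from
        tendsto_const_nhds.div_atTop tendsto_id)
      filter_upwards [eventually_ge_atTop T] with R hR
      rw [Real.norm_eq_abs, abs_sub_comm]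
      exact abs_EE_sub_le hT hR (hballx x₀ hx₀s)
    have he2 : Tendsto (fun R =>
        (∫ t in T..R, (t * Real.cos (ph x₀ t) * kk x₀ t + Real.sin (ph x₀ t) * kxx x₀ t))
          - ∫ t in Ioi T, (t * Real.cos (ph x₀ t) * kk x₀ t + Real.sin (ph x₀ t) * kxx x₀ t))
        atTop (𝓝 0) := by
      have hcst : Tendsto (fun _ : ℝ =>
          ∫ t in Ioi T, (t * Real.cos (ph x₀ t) * kk x₀ t + Real.sin (ph x₀ t) * kxx x₀ t))
          atTop (𝓝 (∫ t in Ioi T,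
            (t * Real.cos (ph x₀ t) * kk x₀ t + Real.sin (ph x₀ t) * kxx x₀ t))) :=
        tendsto_const_nhds
      have := (intervalIntegral_tendsto_integral_Ioi T (hint_dsinkk x₀ hx₀s) tendsto_id).sub hcst
      simpa using this
    have hconv2 : Tendsto (fun R => x₀ * Fn R x₀) atTop (𝓝 (DD + 0 + 0)) := by
      exact Tendsto.congr' (Filter.EventuallyEq.symm hkey)
        ((tendsto_const_nhds.add he1).add he2)
    rw [add_zero, add_zero] at hconv2
    exact tendsto_nhds_unique hconv2 hconv1
  -- conclude
  have hAd : ∀ y ∈ s, deriv Ai y = (1 / π) * A1 y := by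
    intro y hy
    have h1 := (hAi' y hy).const_mul (1 / π)
    have h2 : (fun z => (1 / π) * (π * Ai z)) = Ai := by
      funext z
      field_simp
    rw [h2] at h1
    exact h1.deriv
  have hev : deriv Ai =ᶠ[𝓝 x₀] fun y => (1 / π) * A1 y :=
    Filter.eventuallyEq_of_mem (hs_open.mem_nhds hx₀s) hAd
  have hstep : deriv (deriv Ai) x₀ = deriv (fun y => (1 / π) * A1 y) x₀ := hev.deriv_eq
  have hfinal : deriv (fun y => (1 / π) * A1 y) x₀ = (1 / π) * DD :=
    (hA1deriv.const_mul (1 / π)).deriv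
  rw [hstep, hfinal, hDD]
  have hπ : π ≠ 0 := Real.pi_ne_zero
  field_simp
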